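/- Assume that 1 − T : M → M is invertible, and let φ : Adj(A(M,T)) → F(M,T) be the isomorphism with φ(e_x) = (1, x, 0). Then the unique homomorphism ε : Adj(A(M,T)) → ℤ with ε(e_x) = 1 for all x corresponds under φ to the projection (k, x, α) ↦ k; consequently φ restricts to an isomorphism from the kernel Adj(A(M,T))^o of ε onto the subgroup F(M,T)^o = {(0, x, α) : x ∈ M, α ∈ S(M,T)}, on which the multiplication is (0, x, α)(0, y, β) = (0, x + y, α + β + [x ⊗ y]). -/

import Mathlib

/-!
Common setup: the adjoint group of the Alexander quandle `A(M,T)` (F.J.-B.J. Clauwens,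
"The adjoint group of an Alexander quandle").

For an abelian group `M` with automorphism `T`, the Alexander quandle `A(M,T)` is `M` with
`y * x = T y + x - T x`, and the adjoint group `Adj(A(M,T))` is presented with generators
`e x` for `x : M` and relations `e (y * x) = (e x)⁻¹ * e y * e x`.
-/

open scoped TensorProduct

namespace Clauwens

variable {M : Type*} [AddCommGroup M]

/-- The relations of the adjoint group of the Alexander quandle `A(M,T)`:
for each `x y : M`, the relation `e_{y*x} = e_x⁻¹ * e_y * e_x`, where `y*x = T y + x - T x`. -/
def rels (T : M ≃+ M) : Set (FreeGroup M) :=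
  {r | ∃ x y : M, r = FreeGroup.of (T y + x - T x) *
      ((FreeGroup.of x)⁻¹ * FreeGroup.of y * FreeGroup.of x)⁻¹}

/-- The adjoint group `Adj(A(M,T))` of the Alexander quandle. -/
abbrev Adj (T : M ≃+ M) : Type _ := PresentedGroup (rels T)

/-- The generator `e_x` of the adjoint group. -/
def e (T : M ≃+ M) (x : M) : Adj T := PresentedGroup.of x

/-- The quandle automorphism `p ↦ p * x = T p + x - T x` of `A(M,T)`. -/
def σ (T : M ≃+ M) (x : M) : Equiv.Perm M where
  toFun p := T p + (x - T x)
  invFun p := T.symm (p - (x - T x))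
  left_inv p := by simp
  right_inv p := by simp

lemma σ_apply (T : M ≃+ M) (x p : M) : σ T x p = T p + (x - T x) := rfl

lemma σ_inv_apply (T : M ≃+ M) (x p : M) : (σ T x)⁻¹ p = T.symm (p - (x - T x)) := rfl

lemma σ_rel (T : M ≃+ M) (x y : M) :
    σ T x * σ T y * (σ T x)⁻¹ = σ T (T y + x - T x) := by
  ext p
  simp only [Equiv.Perm.mul_apply, σ_apply, σ_inv_apply, map_add, map_sub,
    AddEquiv.apply_symm_apply]
  abel

/-- The homomorphism `ρ` from the adjoint group to the group of quandle automorphisms of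
`A(M,T)` acting on the right of `M` (hence the `ᵐᵒᵖ`), induced by the right action
`p · e_x = p * x = T p + x - T x`; the automorphism by which `g` acts is `(ρ T g).unop`. -/
def ρ (T : M ≃+ M) : Adj T →* (Equiv.Perm M)ᵐᵒᵖ :=
  PresentedGroup.toGroup (f := fun x => MulOpposite.op (σ T x)) (by
    rintro r ⟨x, y, rfl⟩
    simp only [map_mul, map_inv, FreeGroup.lift_apply_of, ← MulOpposite.op_inv, ← MulOpposite.op_mul,
      mul_inv_rev, inv_inv]
    rw [MulOpposite.op_eq_one_iff, ← σ_rel T x y]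
    group)

/-- `γ(x,y) = e_0⁻¹ e_{x+y} e_y⁻¹ e_0 e_x⁻¹ e_0`, so that
`e_0⁻¹ e_{x+y} = γ(x,y) e_0⁻¹ e_x e_0⁻¹ e_y`. -/
def γ (T : M ≃+ M) (x y : M) : Adj T :=
  (e T 0)⁻¹ * e T (x + y) * (e T y)⁻¹ * e T 0 * (e T x)⁻¹ * e T 0

/-- `λ(x,y) = γ(y,x)⁻¹ γ(x,y)`. -/
def lam (T : M ≃+ M) (x y : M) : Adj T := (γ T y x)⁻¹ * γ T x y

/-- The additive endomorphism `τ` of `M ⊗_ℤ M` with `τ(x ⊗ y) = T y ⊗ x`. -/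
noncomputable def τmap (T : M ≃+ M) : M ⊗[ℤ] M →ₗ[ℤ] M ⊗[ℤ] M :=
  (TensorProduct.comm ℤ M M).toLinearMap ∘ₗ
    (LinearMap.lTensor M T.toAddMonoidHom.toIntLinearMap)

lemma τmap_tmul (T : M ≃+ M) (x y : M) : τmap T (x ⊗ₜ[ℤ] y) = T y ⊗ₜ[ℤ] x := rfl

/-- `S(M,T) = coker(1 - τ) = (M ⊗_ℤ M)/im(1 - τ)`. -/
abbrev S (T : M ≃+ M) : Type _ :=
  (M ⊗[ℤ] M) ⧸ LinearMap.range (LinearMap.id - τmap T)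

/-- The class `[x ⊗ y]` in `S(M,T)`. -/
noncomputable def cls (T : M ≃+ M) (x y : M) : S T := Submodule.Quotient.mk (x ⊗ₜ[ℤ] y)

lemma mk_τmap (T : M ≃+ M) (w : M ⊗[ℤ] M) :
    (Submodule.Quotient.mk (τmap T w) : S T) = Submodule.Quotient.mk w := by
  rw [Submodule.Quotient.eq]
  exact ⟨-w, by simp [LinearMap.sub_apply]; abel⟩

lemma cls_T (T : M ≃+ M) (x y : M) : cls T (T x) (T y) = cls T x y := by
  have h1 : cls T (T x) (T y) = Submodule.Quotient.mk (τmap T (T y ⊗ₜ[ℤ] x)) := rfl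
  have h2 : (Submodule.Quotient.mk (T y ⊗ₜ[ℤ] x) : S T)
      = Submodule.Quotient.mk (τmap T (x ⊗ₜ[ℤ] y)) := rfl
  rw [h1, mk_τmap, h2, mk_τmap]; rfl

lemma cls_add_left (T : M ≃+ M) (x x' y : M) :
    cls T (x + x') y = cls T x y + cls T x' y := by
  simp only [cls, ← Submodule.Quotient.mk_add, TensorProduct.add_tmul]

lemma cls_add_right (T : M ≃+ M) (x y y' : M) :
    cls T x (y + y') = cls T x y + cls T x y' := by
  simp only [cls, ← Submodule.Quotient.mk_add, TensorProduct.tmul_add]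

lemma cls_neg_left (T : M ≃+ M) (x y : M) : cls T (-x) y = -cls T x y := by
  simp only [cls, ← Submodule.Quotient.mk_neg, TensorProduct.neg_tmul]

lemma cls_zero_left (T : M ≃+ M) (y : M) : cls T 0 y = 0 := by
  simp [cls, TensorProduct.zero_tmul]

lemma cls_zero_right (T : M ≃+ M) (x : M) : cls T x 0 = 0 := by
  simp [cls, TensorProduct.tmul_zero]

/-- `T^m` for `m : ℤ`. -/
def Tz (T : M ≃+ M) (m : ℤ) : M ≃+ M := (m • T : AddAut M)

lemma Tz_zero (T : M ≃+ M) (x : M) : Tz T 0 x = x := rfl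

lemma Tz_one (T : M ≃+ M) (x : M) : Tz T 1 x = T x := by simp [Tz]

lemma Tz_add (T : M ≃+ M) (m n : ℤ) (x : M) : Tz T (m + n) x = Tz T m (Tz T n x) := by
  simp [Tz, add_zsmul, AddAut.add_apply]

lemma cls_Tz_shift (T : M ≃+ M) (m : ℤ) (x y : M) :
    cls T (Tz T (m + 1) x) (Tz T (m + 1) y) = cls T (Tz T m x) (Tz T m y) := by
  have h : ∀ z : M, Tz T (m + 1) z = T (Tz T m z) := by
    intro z; rw [add_comm, Tz_add, Tz_one]
  rw [h, h, cls_T]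

lemma cls_Tz (T : M ≃+ M) (m : ℤ) (x y : M) :
    cls T (Tz T m x) (Tz T m y) = cls T x y := by
  induction m using Int.induction_on with
  | zero => rfl
  | succ i ih => rw [cls_Tz_shift, ih]
  | pred i ih =>
      have h := cls_Tz_shift T (-(i : ℤ) - 1) x y
      rw [sub_add_cancel] at h
      rw [← h, ih]

/-- `F(M,T)` is the set `ℤ × M × S(M,T)` equipped with the multiplication
`(k, x, α)(m, y, β) = (k + m, T^m x + y, α + β + [T^m x ⊗ y])`. -/
abbrev F (T : M ≃+ M) : Type _ := ℤ × M × S T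

noncomputable instance (T : M ≃+ M) : Group (F T) where
  mul g h := (g.1 + h.1, Tz T h.1 g.2.1 + h.2.1, g.2.2 + h.2.2 + cls T (Tz T h.1 g.2.1) h.2.1)
  one := ((0 : ℤ), (0 : M), (0 : S T))
  inv g := (-g.1, -(Tz T (-g.1) g.2.1), -g.2.2 + cls T g.2.1 g.2.1)
  mul_assoc g h k := by
    obtain ⟨a, x, α⟩ := g; obtain ⟨b, y, β⟩ := h; obtain ⟨c, z, δ⟩ := k
    refine Prod.ext (add_assoc a b c) (Prod.ext ?_ ?_)
    · show Tz T c (Tz T b x + y) + z = Tz T (b + c) x + (Tz T c y + z)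
      rw [add_comm b c, Tz_add, map_add]
      abel
    · show α + β + cls T (Tz T b x) y + δ + cls T (Tz T c (Tz T b x + y)) z
        = α + (β + δ + cls T (Tz T c y) z) + cls T (Tz T (b + c) x) (Tz T c y + z)
      rw [add_comm b c, Tz_add, map_add, cls_add_left, cls_add_right]
      have h1 : cls T (Tz T c (Tz T b x)) (Tz T c y) = cls T (Tz T b x) y := cls_Tz T c _ _
      rw [h1]
      abel
  one_mul g := by
    obtain ⟨a, x, α⟩ := g
    refine Prod.ext (zero_add a) (Prod.ext ?_ ?_)
    · show Tz T a 0 + x = x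
      rw [map_zero, zero_add]
    · show 0 + α + cls T (Tz T a 0) x = α
      rw [map_zero, cls_zero_left, zero_add, add_zero]
  mul_one g := by
    obtain ⟨a, x, α⟩ := g
    refine Prod.ext (add_zero a) (Prod.ext ?_ ?_)
    · show Tz T 0 x + 0 = x
      rw [Tz_zero, add_zero]
    · show α + 0 + cls T (Tz T 0 x) 0 = α
      rw [cls_zero_right, add_zero, add_zero]
  inv_mul_cancel g := by
    obtain ⟨a, x, α⟩ := g
    have hx : Tz T a (Tz T (-a) x) = x := by
      rw [← Tz_add, add_neg_cancel, Tz_zero]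
    refine Prod.ext (neg_add_cancel a) (Prod.ext ?_ ?_)
    · show Tz T a (-(Tz T (-a) x)) + x = 0
      rw [map_neg, hx, neg_add_cancel]
    · show -α + cls T x x + α + cls T (Tz T a (-(Tz T (-a) x))) x = 0
      rw [map_neg, hx, cls_neg_left]
      abel

/-- The canonical augmentation `ε : Adj(A(M,T)) → ℤ`, with `ε(e_x) = 1` for all `x`
(written multiplicatively since `Adj` is a multiplicative group). -/
def ε (T : M ≃+ M) : Adj T →* Multiplicative ℤ :=
  PresentedGroup.toGroup (f := fun _ => Multiplicative.ofAdd (1 : ℤ)) (by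
    rintro r ⟨x, y, rfl⟩
    simp only [map_mul, map_inv, FreeGroup.lift_apply_of]
    group)

/-- The subgroup `F(M,T)⁰` of elements `(0, x, α)` of `F(M,T)`. -/
noncomputable def Fo (T : M ≃+ M) : Subgroup (F T) where
  carrier := {g | g.1 = 0}
  mul_mem' := by
    rintro ⟨a, x, α⟩ ⟨b, y, β⟩ (ha : a = 0) (hb : b = 0)
    show a + b = 0
    rw [ha, hb, add_zero]
  one_mem' := rfl
  inv_mem' := by
    rintro ⟨a, x, α⟩ (ha : a = 0)
    show -a = 0
    rw [ha, neg_zero]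

/-- The fundamental group `π₁(A(M,T), 0)` of the Alexander quandle based at `0 ∈ M`:
the elements of `ker ε` fixing the base point `0`. -/
def pi1 (T : M ≃+ M) : Subgroup (Adj T) where
  carrier := {g | g ∈ (ε T).ker ∧ (ρ T g).unop 0 = 0}
  one_mem' := ⟨(ε T).ker.one_mem, by simp⟩
  mul_mem' := by
    intro a b ha hb
    refine ⟨(ε T).ker.mul_mem ha.1 hb.1, ?_⟩
    show ((ρ T) (a * b)).unop 0 = 0
    rw [map_mul, MulOpposite.unop_mul, Equiv.Perm.mul_apply, ha.2, hb.2]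
  inv_mem' := by
    intro a ha
    refine ⟨(ε T).ker.inv_mem ha.1, ?_⟩
    show ((ρ T) a⁻¹).unop 0 = 0
    rw [map_inv, MulOpposite.unop_inv]
    exact Equiv.Perm.inv_eq_iff_eq.mpr ha.2.symm




section Aux
variable (T : M ≃+ M)

def aa : Adj T := e T 0

def bb (x : M) : Adj T := (aa T)⁻¹ * e T x

def ccc (x y : M) : Adj T := bb T x * bb T y * (bb T (x + y))⁻¹

def kk (x y : M) : Adj T := bb T x * bb T y * (bb T x)⁻¹ * (bb T y)⁻¹

lemma rel_e (x y : M) : e T (T y + x - T x) = (e T x)⁻¹ * e T y * e T x := by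
  have hr : (FreeGroup.of (T y + x - T x) *
      ((FreeGroup.of x)⁻¹ * FreeGroup.of y * FreeGroup.of x)⁻¹ : FreeGroup M) ∈ rels T :=
    ⟨x, y, rfl⟩
  have h1 : PresentedGroup.mk (rels T) (FreeGroup.of (T y + x - T x) *
      ((FreeGroup.of x)⁻¹ * FreeGroup.of y * FreeGroup.of x)⁻¹) = 1 := by
    have := Subgroup.subset_normalClosure hr
    exact (QuotientGroup.eq_one_iff _).mpr this
  rw [map_mul, map_inv, map_mul, map_mul, map_inv, mul_inv_eq_one] at h1
  exact h1

lemma bb_zero : bb T 0 = 1 := by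
  simp [bb, aa]

lemma e_eq (x : M) : e T x = aa T * bb T x := by
  simp [bb]

lemma bb_a (y : M) : bb T y * aa T = aa T * bb T (T y) := by
  have h := rel_e T 0 y
  simp only [map_zero, add_zero, sub_zero] at h
  -- h : e T (T y) = (e T 0)⁻¹ * e T y * e T 0
  have : aa T * bb T (T y) = (aa T)⁻¹ * (aa T * bb T y) * aa T := by
    rw [← e_eq, ← e_eq, h]; rfl
  rw [this]; group

lemma bb_a_inv (y : M) : (aa T)⁻¹ * bb T y * aa T = bb T (T y) := by
  rw [mul_assoc, bb_a]; group

lemma relR (x Y : M) : (bb T (T x))⁻¹ * bb T Y * bb T x = bb T (x - T x + Y) := by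
  obtain ⟨y, rfl⟩ : ∃ y, T y = Y := ⟨T.symm Y, T.apply_symm_apply Y⟩
  have h := rel_e T x y
  rw [e_eq, e_eq, e_eq] at h
  -- a * bb (Ty + x - Tx) = (a * bb x)⁻¹ * (a * bb y) * (a * bb x)
  have h2 : aa T * bb T (T y + x - T x) = (bb T x)⁻¹ * (bb T y * aa T) * bb T x := by
    rw [h]; group
  rw [bb_a] at h2
  -- a * bb (Ty + x - Tx) = bb x⁻¹ * (a * bb (T y)) * bb x
  have h3 : bb T (T y + x - T x)
      = (aa T)⁻¹ * ((bb T x)⁻¹ * (aa T * bb T (T y)) * bb T x) := by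
    rw [← h2]; group
  have h5 : x - T x + T y = T y + x - T x := by abel
  rw [h5, h3, ← bb_a_inv T x]; group

lemma dagger (x : M) : (bb T (T x))⁻¹ * bb T x = bb T (x - T x) := by
  have h := relR T x 0
  rw [bb_zero] at h
  simpa using h


lemma conj_cancel {G : Type*} [Group G] {a b : G} (h : Commute a b) : a⁻¹ * b * a = b := by
  rw [mul_assoc, ← h.eq]; group

lemma kk_eq (p q : M) : kk T p q = ccc T p q * (ccc T q p)⁻¹ := by
  rw [kk, ccc, ccc, show q + p = p + q from add_comm q p]; group

lemma kk_anti (p q : M) : kk T p q = (kk T q p)⁻¹ := by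
  rw [kk, kk]; group

lemma kk_self (p : M) : kk T p p = 1 := by rw [kk]; group

lemma bb_swap (p q : M) : bb T q * bb T p = kk T q p * (bb T p * bb T q) := by
  rw [kk]; group

lemma c_zero_left (y : M) : ccc T 0 y = 1 := by rw [ccc, bb_zero, zero_add]; group

lemma c_zero_right (u : M) : ccc T u 0 = 1 := by rw [ccc, bb_zero, add_zero]; group


variable (hT : Function.Bijective fun x : M => x - T x)
include hT

/-- `1 - T` as an additive hom. -/
def oneSub : M →+ M :=
  AddMonoidHom.mk' (fun x => x - T x) (by intro p q; simp only [map_add]; abel)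

/-- `1 - T` as an additive equivalence. -/
noncomputable def HH : M ≃+ M := AddEquiv.ofBijective (oneSub T) hT

lemma HH_apply (p : M) : HH T hT p = p - T p := rfl

/-- inverse of `1 - T`. -/
noncomputable def hh : M → M := (HH T hT).symm

lemma hh_spec (u : M) : hh T hT u - T (hh T hT u) = u := (HH T hT).apply_symm_apply u

lemma hh_HH (p : M) : hh T hT (p - T p) = p := (HH T hT).symm_apply_apply p

lemma HH_hh (u : M) : HH T hT (hh T hT u) = u := (HH T hT).apply_symm_apply u

lemma hh_add (u v : M) : hh T hT (u + v) = hh T hT u + hh T hT v := map_add _ u v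

lemma lemK (u Y : M) :
    (bb T (hh T hT u))⁻¹ * bb T Y * bb T (hh T hT u) = (bb T u)⁻¹ * bb T (u + Y) := by
  set p := hh T hT u with hp
  have hpu : p - T p = u := hh_spec T hT u
  have h1 := relR T p Y
  rw [hpu] at h1
  have h2 := dagger T p
  rw [hpu] at h2
  have h3 : (bb T (T p))⁻¹ = bb T u * (bb T p)⁻¹ := by rw [← h2]; group
  rw [h3] at h1
  rw [← h1]; group

lemma conj2 (p q w : M) :
    (bb T q * bb T p)⁻¹ * bb T w * (bb T q * bb T p)
      = (bb T (p + q))⁻¹ * bb T w * bb T (p + q) := by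
  set u := p - T p with hu
  set v := q - T q with hv
  have hup : hh T hT u = p := hh_HH T hT p
  have hvq : hh T hT v = q := hh_HH T hT q
  have h1 : (bb T q)⁻¹ * bb T w * bb T q = (bb T v)⁻¹ * bb T (v + w) := by
    rw [← hvq]; exact lemK T hT v w
  have h2 : (bb T p)⁻¹ * bb T v * bb T p = (bb T u)⁻¹ * bb T (u + v) := by
    rw [← hup]; exact lemK T hT u v
  have h3 : (bb T p)⁻¹ * bb T (v + w) * bb T p = (bb T u)⁻¹ * bb T (u + (v + w)) := by
    rw [← hup]; exact lemK T hT u (v + w)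
  have h4 : hh T hT (u + v) = p + q := by rw [hh_add, hup, hvq]
  have h5 : (bb T (p + q))⁻¹ * bb T w * bb T (p + q)
      = (bb T (u + v))⁻¹ * bb T ((u + v) + w) := by
    rw [← h4]; exact lemK T hT (u + v) w
  have lhs : (bb T q * bb T p)⁻¹ * bb T w * (bb T q * bb T p)
      = (bb T p)⁻¹ * ((bb T q)⁻¹ * bb T w * bb T q) * bb T p := by group
  rw [lhs, h1]
  have expand : (bb T p)⁻¹ * ((bb T v)⁻¹ * bb T (v + w)) * bb T p
      = ((bb T p)⁻¹ * bb T v * bb T p)⁻¹ * ((bb T p)⁻¹ * bb T (v + w) * bb T p) := by group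
  rw [show (bb T p)⁻¹ * ((bb T v)⁻¹ * bb T (v + w)) * bb T p
      = ((bb T p)⁻¹ * bb T v * bb T p)⁻¹ * ((bb T p)⁻¹ * bb T (v + w) * bb T p) from expand,
    h2, h3, h5]
  rw [show u + (v + w) = (u + v) + w from (add_assoc u v w).symm]
  group

lemma comm_c_b (p q w : M) : Commute (ccc T p q) (bb T w) := by
  have h := conj2 T hT q p w
  rw [show q + p = p + q from add_comm q p] at h
  show ccc T p q * bb T w = bb T w * ccc T p q
  calc ccc T p q * bb T w
      = (bb T p * bb T q) * ((bb T (p + q))⁻¹ * bb T w * bb T (p + q)) * (bb T (p + q))⁻¹ := by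
        rw [ccc]; group
    _ = (bb T p * bb T q) * ((bb T p * bb T q)⁻¹ * bb T w * (bb T p * bb T q))
          * (bb T (p + q))⁻¹ := by rw [h]
    _ = bb T w * ccc T p q := by rw [ccc]; group

lemma comm_c_c (p q x y : M) : Commute (ccc T p q) (ccc T x y) := by
  have h1 := comm_c_b T hT p q x
  have h2 := comm_c_b T hT p q y
  have h3 := comm_c_b T hT p q (x + y)
  exact (h1.mul_right h2).mul_right h3.inv_right

lemma comm_k_b (p q w : M) : Commute (kk T p q) (bb T w) := by
  rw [kk_eq]
  exact (comm_c_b T hT p q w).mul_left (comm_c_b T hT q p w).inv_left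

lemma comm_k_c (p q x y : M) : Commute (kk T p q) (ccc T x y) := by
  rw [kk_eq]
  exact (comm_c_c T hT p q x y).mul_left (comm_c_c T hT q p x y).inv_left

lemma comm_k_k (p q x y : M) : Commute (kk T p q) (kk T x y) := by
  rw [kk_eq T x y]
  exact (comm_k_c T hT p q x y).mul_right (comm_k_c T hT p q y x).inv_right

lemma swap_inv (v y : M) :
    (bb T v)⁻¹ * bb T y = kk T y v * (bb T y * (bb T v)⁻¹) := by
  have h := bb_swap T v y
  have hk : Commute (bb T v) (kk T y v) := (comm_k_b T hT y v v).symm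
  calc (bb T v)⁻¹ * bb T y
      = (bb T v)⁻¹ * (bb T y * bb T v) * (bb T v)⁻¹ := by group
    _ = (bb T v)⁻¹ * (kk T y v * (bb T v * bb T y)) * (bb T v)⁻¹ := by rw [h]
    _ = ((bb T v)⁻¹ * kk T y v * bb T v) * bb T y * (bb T v)⁻¹ := by group
    _ = kk T y v * (bb T y * (bb T v)⁻¹) := by rw [conj_cancel hk]; group

lemma star3 (p q : M) : ccc T (p - T p) q = kk T p q := by
  set u := p - T p with hu
  have hup : hh T hT u = p := hh_HH T hT p
  have hK : (bb T p)⁻¹ * bb T q * bb T p = (bb T u)⁻¹ * bb T (u + q) := by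
    rw [← hup]; exact lemK T hT u q
  have hexp : bb T (u + q) = (ccc T u q)⁻¹ * (bb T u * bb T q) := by rw [ccc]; group
  have hcomm : Commute (bb T u) ((ccc T u q)⁻¹) := ((comm_c_b T hT u q u).inv_left).symm
  have h1 : (bb T u)⁻¹ * bb T (u + q) = (ccc T u q)⁻¹ * bb T q := by
    calc (bb T u)⁻¹ * bb T (u + q)
        = (bb T u)⁻¹ * ((ccc T u q)⁻¹ * (bb T u * bb T q)) := by rw [hexp]
      _ = ((bb T u)⁻¹ * (ccc T u q)⁻¹ * bb T u) * bb T q := by group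
      _ = (ccc T u q)⁻¹ * bb T q := by rw [conj_cancel hcomm]
  rw [h1] at hK
  -- hK : bp⁻¹ * bq * bp = c⁻¹ * bq
  have h2 : ccc T u q = bb T q * ((bb T p)⁻¹ * bb T q * bb T p)⁻¹ := by rw [hK]; group
  have h3 : Commute (bb T p) (ccc T u q) := (comm_c_b T hT u q p).symm
  calc ccc T u q = bb T p * ccc T u q * (bb T p)⁻¹ := by rw [h3.eq]; group
    _ = bb T p * (bb T q * ((bb T p)⁻¹ * bb T q * bb T p)⁻¹) * (bb T p)⁻¹ := by rw [← h2]
    _ = kk T p q := by rw [kk]; group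

lemma star3' (p q : M) : ccc T (HH T hT p) q = kk T p q := star3 T hT p q

lemma kk_add_left (p p' q : M) : kk T (p + p') q = kk T p q * kk T p' q := by
  have e1 : bb T (p + p') = (ccc T p p')⁻¹ * (bb T p * bb T p') := by rw [ccc]; group
  have hX : Commute (ccc T p p')
      (bb T p * bb T p' * bb T q * (bb T p * bb T p')⁻¹) := by
    have h1 := comm_c_b T hT p p' p
    have h2 := comm_c_b T hT p p' p'
    have h3 := comm_c_b T hT p p' q
    exact ((h1.mul_right h2).mul_right h3).mul_right (h1.mul_right h2).inv_right
  have hswap := bb_swap T q p'  -- bb p' * bb q = kk p' q * (bb q * bb p')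
  have hk : Commute (bb T p) (kk T p' q) := (comm_k_b T hT p' q p).symm
  calc kk T (p + p') q
      = (ccc T p p')⁻¹ * (bb T p * bb T p' * bb T q * (bb T p * bb T p')⁻¹) * (ccc T p p')
          * (bb T q)⁻¹ := by rw [kk, e1]; group
    _ = (bb T p * bb T p' * bb T q * (bb T p * bb T p')⁻¹) * (bb T q)⁻¹ := by
        rw [conj_cancel hX]
    _ = bb T p * (bb T p' * bb T q) * (bb T p')⁻¹ * (bb T p)⁻¹ * (bb T q)⁻¹ := by group
    _ = bb T p * (kk T p' q * (bb T q * bb T p')) * (bb T p')⁻¹ * (bb T p)⁻¹ * (bb T q)⁻¹ := by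
        rw [hswap]
    _ = (bb T p * kk T p' q) * bb T q * (bb T p)⁻¹ * (bb T q)⁻¹ := by group
    _ = (kk T p' q * bb T p) * bb T q * (bb T p)⁻¹ * (bb T q)⁻¹ := by rw [hk.eq]
    _ = kk T p' q * kk T p q := by
        rw [show kk T p q = bb T p * bb T q * (bb T p)⁻¹ * (bb T q)⁻¹ from rfl]; group
    _ = kk T p q * kk T p' q := (comm_k_k T hT p' q p q).eq

lemma kk_add_right (p q q' : M) : kk T p (q + q') = kk T p q * kk T p q' := by
  rw [kk_anti T p (q + q'), kk_add_left T hT q q' p, mul_inv_rev,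
    ← kk_anti T p q', ← kk_anti T p q]
  exact (comm_k_k T hT p q' p q).eq

lemma c_add_left (u u' y : M) : ccc T (u + u') y = ccc T u y * ccc T u' y := by
  have h1 : u + u' = HH T hT (hh T hT u + hh T hT u') := by
    rw [map_add, HH_hh, HH_hh]
  rw [h1, star3', kk_add_left T hT, ← star3' T hT, ← star3' T hT, HH_hh, HH_hh]

lemma c_add_right (u y y' : M) : ccc T u (y + y') = ccc T u y * ccc T u y' := by
  have h1 : u = HH T hT (hh T hT u) := (HH_hh T hT u).symm
  rw [h1, star3', kk_add_right T hT, ← star3' T hT, ← star3' T hT]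

lemma c_neg_right (u y : M) : ccc T u (-y) = (ccc T u y)⁻¹ := by
  have h := c_add_right T hT u y (-y)
  rw [add_neg_cancel, c_zero_right T u] at h
  exact (inv_eq_of_mul_eq_one_right h.symm).symm

lemma c_neg_left (u y : M) : ccc T (-u) y = (ccc T u y)⁻¹ := by
  have h := c_add_left T hT u (-u) y
  rw [add_neg_cancel, c_zero_left T y] at h
  exact (inv_eq_of_mul_eq_one_right h.symm).symm

omit hT in
lemma central_calc {G : Type*} [Group G] {c1 c2 c3 : G} (h13 : Commute c1 c3) :
    c1 * (c2 * c3⁻¹)⁻¹ * c2 * c1⁻¹ = c3 := by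
  calc c1 * (c2 * c3⁻¹)⁻¹ * c2 * c1⁻¹ = (c1 * c3) * c1⁻¹ := by group
    _ = (c3 * c1) * c1⁻¹ := by rw [h13.eq]
    _ = c3 := by group

omit hT in
lemma bT_eq (x : M) : bb T (T x) = bb T x * (bb T (x - T x))⁻¹ := by
  rw [← dagger T x]; group

lemma c_T (x y : M) : ccc T (T x) (T y) = ccc T x y := by
  set vx := x - T x with hvx
  set vy := y - T y with hvy
  have hxy : (x + y) - T (x + y) = vx + vy := by rw [map_add, hvx, hvy]; abel
  have hmid : (bb T vx)⁻¹ * (bb T vy)⁻¹ * bb T (vx + vy) = (ccc T vy vx)⁻¹ := by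
    have h0 : bb T vy * bb T vx = ccc T vy vx * bb T (vy + vx) := by rw [ccc]; group
    have hc : Commute (bb T (vx + vy)) ((ccc T vy vx)⁻¹) :=
      ((comm_c_b T hT vy vx (vx + vy)).inv_left).symm
    calc (bb T vx)⁻¹ * (bb T vy)⁻¹ * bb T (vx + vy)
        = (bb T vy * bb T vx)⁻¹ * bb T (vx + vy) := by group
      _ = (ccc T vy vx * bb T (vy + vx))⁻¹ * bb T (vx + vy) := by rw [h0]
      _ = (bb T (vx + vy))⁻¹ * (ccc T vy vx)⁻¹ * bb T (vx + vy) := by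
          rw [show vy + vx = vx + vy from add_comm vy vx]; group
      _ = (ccc T vy vx)⁻¹ := conj_cancel hc
  have hstar : ccc T vy vx = kk T y vx := star3 T hT y vx
  have hkb : Commute ((kk T y vx)⁻¹) (bb T y) := (comm_k_b T hT y vx y).inv_left
  calc ccc T (T x) (T y)
      = bb T (T x) * bb T (T y) * (bb T (T (x + y)))⁻¹ := by rw [ccc, ← map_add]
    _ = (bb T x * (bb T vx)⁻¹) * (bb T y * (bb T vy)⁻¹)
          * (bb T (x + y) * (bb T ((x + y) - T (x + y)))⁻¹)⁻¹ := by
        rw [← bT_eq T x, ← bT_eq T y, ← bT_eq T (x + y)]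
    _ = bb T x * ((bb T vx)⁻¹ * bb T y) * (bb T vy)⁻¹ * bb T (vx + vy)
          * (bb T (x + y))⁻¹ := by rw [hxy]; group
    _ = bb T x * (kk T y vx * (bb T y * (bb T vx)⁻¹)) * (bb T vy)⁻¹ * bb T (vx + vy)
          * (bb T (x + y))⁻¹ := by rw [swap_inv T hT vx y]
    _ = bb T x * kk T y vx * bb T y * ((bb T vx)⁻¹ * (bb T vy)⁻¹ * bb T (vx + vy))
          * (bb T (x + y))⁻¹ := by group
    _ = bb T x * kk T y vx * bb T y * (ccc T vy vx)⁻¹ * (bb T (x + y))⁻¹ := by rw [hmid]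
    _ = bb T x * kk T y vx * (bb T y * (kk T y vx)⁻¹) * (bb T (x + y))⁻¹ := by
        rw [hstar]; group
    _ = bb T x * kk T y vx * ((kk T y vx)⁻¹ * bb T y) * (bb T (x + y))⁻¹ := by
        rw [← hkb.eq]
    _ = ccc T x y := by rw [ccc]; group

lemma c_Ty_y (y : M) : ccc T (T y) y = ccc T y y := by
  have h := star3 T hT y y
  rw [kk_self] at h
  have h2 : ccc T (y - T y) y = ccc T y y * (ccc T (T y) y)⁻¹ := by
    rw [show y - T y = y + -(T y) from sub_eq_add_neg y (T y), c_add_left T hT,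
      c_neg_left T hT]
  rw [h2] at h
  exact (mul_inv_eq_one.mp h).symm

lemma c_Ty_vy (y : M) : ccc T (T y) (y - T y) = 1 := by
  rw [show y - T y = y + -(T y) from sub_eq_add_neg y (T y), c_add_right T hT,
    c_neg_right T hT, c_Ty_y T hT, c_T T hT y y]
  group

lemma c_Tswap (x y : M) : ccc T (T y) x = ccc T x y := by
  set vy := y - T y with hvy
  have hbTy : bb T (T y) = bb T y * (bb T vy)⁻¹ := bT_eq T y
  have hswapinv := swap_inv T hT vy x
  have hb : (bb T (T y + x))⁻¹
      = bb T vy * (bb T (y + x))⁻¹ * (ccc T (T y + x) vy)⁻¹ := by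
    have hdef : ccc T (T y + x) vy
        = bb T (T y + x) * bb T vy * (bb T ((T y + x) + vy))⁻¹ := rfl
    have harg : (T y + x) + vy = y + x := by rw [hvy]; abel
    rw [harg] at hdef
    rw [hdef]; group
  have hc1 : ccc T (T y + x) vy = ccc T x vy := by
    rw [c_add_left T hT, c_Ty_vy T hT]; group
  have hfin : Commute (ccc T x vy) (ccc T x y) := comm_c_c T hT x vy x y
  calc ccc T (T y) x
      = bb T (T y) * bb T x * (bb T (T y + x))⁻¹ := rfl
    _ = (bb T y * (bb T vy)⁻¹) * bb T x
          * (bb T vy * (bb T (y + x))⁻¹ * (ccc T (T y + x) vy)⁻¹) := by rw [hbTy, hb]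
    _ = bb T y * ((bb T vy)⁻¹ * bb T x) * bb T vy * (bb T (y + x))⁻¹
          * (ccc T (T y + x) vy)⁻¹ := by group
    _ = bb T y * (kk T x vy * (bb T x * (bb T vy)⁻¹)) * bb T vy * (bb T (y + x))⁻¹
          * (ccc T (T y + x) vy)⁻¹ := by rw [hswapinv]
    _ = (bb T y * kk T x vy) * bb T x * (bb T (y + x))⁻¹ * (ccc T x vy)⁻¹ := by
        rw [hc1]; group
    _ = (kk T x vy * bb T y) * bb T x * (bb T (y + x))⁻¹ * (ccc T x vy)⁻¹ := by
        rw [(comm_k_b T hT x vy y).eq]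
    _ = kk T x vy * ccc T y x * (ccc T x vy)⁻¹ := by
        rw [show ccc T y x = bb T y * bb T x * (bb T (y + x))⁻¹ from rfl]; group
    _ = ccc T x vy * (ccc T y x * (ccc T x y)⁻¹)⁻¹ * ccc T y x * (ccc T x vy)⁻¹ := by
        rw [kk_eq T x vy, star3 T hT y x, kk_eq T y x]
    _ = ccc T x y := central_calc hfin

lemma c_a (x y : M) : ccc T x y * aa T = aa T * ccc T x y := by
  have e3 : (bb T (x + y))⁻¹ * aa T = aa T * (bb T (T (x + y)))⁻¹ := by
    have h := bb_a T (x + y)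
    calc (bb T (x + y))⁻¹ * aa T
        = (bb T (x + y))⁻¹ * (aa T * bb T (T (x + y))) * (bb T (T (x + y)))⁻¹ := by group
      _ = (bb T (x + y))⁻¹ * (bb T (x + y) * aa T) * (bb T (T (x + y)))⁻¹ := by rw [← h]
      _ = aa T * (bb T (T (x + y)))⁻¹ := by group
  have h1 : ccc T x y * aa T = aa T * ccc T (T x) (T y) := by
    calc ccc T x y * aa T
        = bb T x * (bb T y * ((bb T (x + y))⁻¹ * aa T)) := by rw [ccc]; group
      _ = bb T x * (bb T y * (aa T * (bb T (T (x + y)))⁻¹)) := by rw [e3]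
      _ = bb T x * ((bb T y * aa T) * (bb T (T (x + y)))⁻¹) := by group
      _ = bb T x * ((aa T * bb T (T y)) * (bb T (T (x + y)))⁻¹) := by rw [bb_a T y]
      _ = (bb T x * aa T) * (bb T (T y) * (bb T (T (x + y)))⁻¹) := by group
      _ = (aa T * bb T (T x)) * (bb T (T y) * (bb T (T (x + y)))⁻¹) := by rw [bb_a T x]
      _ = aa T * ccc T (T x) (T y) := by rw [ccc, ← map_add]; group
  rw [h1, c_T T hT]

lemma c_central (x y : M) (g : Adj T) : g * ccc T x y = ccc T x y * g := by
  have hmem : ∀ z : M, (PresentedGroup.of z : Adj T)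
      ∈ Subgroup.centralizer {ccc T x y} := by
    intro z
    rw [Subgroup.mem_centralizer_singleton_iff]
    show e T z * ccc T x y = ccc T x y * e T z
    rw [e_eq T z]
    calc (aa T * bb T z) * ccc T x y
        = aa T * (bb T z * ccc T x y) := by group
      _ = aa T * (ccc T x y * bb T z) := by rw [(comm_c_b T hT x y z).symm.eq]
      _ = (aa T * ccc T x y) * bb T z := by group
      _ = (ccc T x y * aa T) * bb T z := by rw [c_a T hT]
      _ = ccc T x y * (aa T * bb T z) := by group
  have hg := PresentedGroup.generated_by (rels T) (Subgroup.centralizer {ccc T x y}) hmem g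
  exact Subgroup.mem_centralizer_singleton_iff.mp hg

lemma c_mem_center (x y : M) : ccc T x y ∈ Subgroup.center (Adj T) :=
  Subgroup.mem_center_iff.mpr (c_central T hT x y)

end Aux


section Aux2
open scoped IsMulCommutative
variable {M : Type*} [AddCommGroup M] (T : M ≃+ M)
  (hT : Function.Bijective fun x : M => x - T x)
include hT

noncomputable def ccZ (x y : M) : Subgroup.center (Adj T) :=
  ⟨ccc T x y, c_mem_center T hT x y⟩

noncomputable def zmapHom : M →+ M →+ Additive ↥(Subgroup.center (Adj T)) :=
  AddMonoidHom.mk'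
    (fun x => AddMonoidHom.mk' (fun y => Additive.ofMul (ccZ T hT x y)) (by
      intro y y'
      exact congrArg Additive.ofMul (Subtype.ext (c_add_right T hT x y y'))))
    (by
      intro x x'
      ext y
      exact c_add_left T hT x x' y)

noncomputable def z0 : M ⊗[ℤ] M →+ Additive ↥(Subgroup.center (Adj T)) :=
  TensorProduct.liftAddHom (zmapHom T hT) (by
    intro r m n
    rw [map_zsmul, AddMonoidHom.smul_apply, map_zsmul])

lemma z0_tmul (x y : M) : z0 T hT (x ⊗ₜ[ℤ] y) = Additive.ofMul (ccZ T hT x y) :=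
  TensorProduct.liftAddHom_tmul _ _ x y

lemma z0_tau (w : M ⊗[ℤ] M) : z0 T hT (τmap T w) = z0 T hT w := by
  induction w using TensorProduct.induction_on with
  | zero => rw [map_zero, map_zero]
  | tmul x y =>
      rw [τmap_tmul, z0_tmul, z0_tmul]
      exact congrArg Additive.ofMul (Subtype.ext (c_Tswap T hT x y))
  | add w w' hw hw' => rw [map_add, map_add, map_add, hw, hw']

noncomputable def zS : S T →ₗ[ℤ] Additive ↥(Subgroup.center (Adj T)) :=
  Submodule.liftQ _ (z0 T hT).toIntLinearMap (by
    rintro w ⟨v, rfl⟩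
    rw [LinearMap.mem_ker, LinearMap.sub_apply, LinearMap.id_apply]
    show z0 T hT (v - τmap T v) = 0
    rw [map_sub, z0_tau, sub_self])

noncomputable def Zf (α : S T) : Adj T :=
  ((Additive.toMul (zS T hT α) : Subgroup.center (Adj T)) : Adj T)

lemma Zf_cls (x y : M) : Zf T hT (cls T x y) = ccc T x y := by
  show ((Additive.toMul (zS T hT (Submodule.Quotient.mk (x ⊗ₜ[ℤ] y)))
      : Subgroup.center (Adj T)) : Adj T) = ccc T x y
  rw [zS, Submodule.liftQ_apply]
  show ((Additive.toMul (z0 T hT (x ⊗ₜ[ℤ] y)) : Subgroup.center (Adj T)) : Adj T) = ccc T x y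
  rw [z0_tmul]
  rfl

lemma Zf_add (α β : S T) : Zf T hT (α + β) = Zf T hT α * Zf T hT β := by
  unfold Zf
  rw [map_add]
  rfl

lemma Zf_zero : Zf T hT (0 : S T) = 1 := by
  unfold Zf
  rw [map_zero]
  rfl

lemma Zf_central (α : S T) (g : Adj T) : g * Zf T hT α = Zf T hT α * g :=
  Subgroup.mem_center_iff.mp (Additive.toMul (zS T hT α)).2 g

lemma bb_pow (m : ℤ) (x : M) :
    bb T x * aa T ^ m = aa T ^ m * bb T (Tz T m x) := by
  induction m using Int.induction_on with
  | zero => rw [zpow_zero, Tz_zero]; group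
  | succ i ih =>
      have harg : Tz T ((i : ℤ) + 1) x = T (Tz T (i : ℤ) x) := by
        rw [add_comm, Tz_add, Tz_one]
      rw [zpow_add_one, ← mul_assoc, ih, mul_assoc, bb_a, harg]
      group
  | pred i ih =>
      have hstep : ∀ w : M, bb T w * (aa T)⁻¹ = (aa T)⁻¹ * bb T (Tz T (-1) w) := by
        intro w
        have h := bb_a T (Tz T (-1) w)
        have harg : T (Tz T (-1) w) = w := by
          have := Tz_add T 1 (-1) w
          rw [show (1 : ℤ) + -1 = 0 from by ring, Tz_zero, Tz_one] at this
          exact this.symm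
        rw [harg] at h
        calc bb T w * (aa T)⁻¹
            = (aa T)⁻¹ * (bb T (Tz T (-1) w) * aa T) * (aa T)⁻¹ := by rw [h]; group
          _ = (aa T)⁻¹ * bb T (Tz T (-1) w) := by group
      have e1 : -(i : ℤ) - 1 = -(i : ℤ) + -1 := by ring
      have e2 : Tz T (-(i : ℤ) + -1) x = Tz T (-1) (Tz T (-(i : ℤ)) x) := by
        rw [show -(i : ℤ) + -1 = -1 + -(i : ℤ) from add_comm _ _, Tz_add]
      rw [e1, e2, zpow_add, zpow_neg_one, ← mul_assoc, ih, mul_assoc, hstep]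
      group

lemma bb_mul (u v : M) : bb T u * bb T v = bb T (u + v) * ccc T u v := by
  have h : ccc T u v * bb T (u + v) = bb T (u + v) * ccc T u v :=
    (c_central T hT u v (bb T (u + v))).symm
  rw [← h, ccc]; group

noncomputable def chi : F T →* Adj T :=
  MonoidHom.mk' (fun g => aa T ^ g.1 * bb T g.2.1 * Zf T hT g.2.2) (by
    rintro ⟨k, x, α⟩ ⟨m, y, β⟩
    show aa T ^ (k + m) * bb T (Tz T m x + y)
        * Zf T hT (α + β + cls T (Tz T m x) y)
      = (aa T ^ k * bb T x * Zf T hT α) * (aa T ^ m * bb T y * Zf T hT β)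
    calc aa T ^ (k + m) * bb T (Tz T m x + y) * Zf T hT (α + β + cls T (Tz T m x) y)
        = aa T ^ (k + m) * bb T (Tz T m x + y)
            * (Zf T hT α * Zf T hT β * ccc T (Tz T m x) y) := by
          rw [Zf_add, Zf_add, Zf_cls]
      _ = aa T ^ (k + m) * (bb T (Tz T m x + y) * ccc T (Tz T m x) y)
            * (Zf T hT α * Zf T hT β) := by
          rw [c_central T hT (Tz T m x) y (Zf T hT α * Zf T hT β)]; group
      _ = aa T ^ (k + m) * (bb T (Tz T m x) * bb T y) * (Zf T hT α * Zf T hT β) := by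
          rw [bb_mul T hT]
      _ = aa T ^ k * (bb T x * aa T ^ m) * bb T y * (Zf T hT α * Zf T hT β) := by
          rw [bb_pow T hT m x, zpow_add]; group
      _ = aa T ^ k * bb T x * ((aa T ^ m * bb T y) * Zf T hT α) * Zf T hT β := by group
      _ = aa T ^ k * bb T x * (Zf T hT α * (aa T ^ m * bb T y)) * Zf T hT β := by
          rw [Zf_central T hT α (aa T ^ m * bb T y)]
      _ = (aa T ^ k * bb T x * Zf T hT α) * (aa T ^ m * bb T y * Zf T hT β) := by group)

lemma chi_gen (x : M) : chi T hT ((1 : ℤ), x, (0 : S T)) = e T x := by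
  show aa T ^ (1 : ℤ) * bb T x * Zf T hT 0 = e T x
  rw [zpow_one, Zf_zero, mul_one, ← e_eq]

end Aux2



section Aux3
variable {M : Type*} [AddCommGroup M] (T : M ≃+ M)

lemma F_mul (k m : ℤ) (x y : M) (α β : S T) :
    (((k, x, α) : F T) * ((m, y, β) : F T))
      = ((k + m, Tz T m x + y, α + β + cls T (Tz T m x) y) : F T) := rfl

lemma F_inv (k : ℤ) (x : M) (α : S T) :
    ((((k, x, α) : F T))⁻¹ : F T)
      = ((-k, -(Tz T (-k) x), -α + cls T x x) : F T) := rfl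

lemma cls_neg_right (x y : M) : cls T x (-y) = -cls T x y := by
  have h := cls_add_right T x y (-y)
  rw [add_neg_cancel, cls_zero_right] at h
  exact (neg_eq_of_add_eq_zero_right h.symm).symm

lemma F_gen_pow (k : ℤ) :
    ((((1 : ℤ), (0 : M), (0 : S T)) : F T)) ^ k = ((k, 0, 0) : F T) := by
  induction k using Int.induction_on with
  | zero => rw [zpow_zero]; rfl
  | succ i ih =>
      rw [zpow_add_one, ih, F_mul]
      refine Prod.ext rfl (Prod.ext ?_ ?_)
      · show Tz T 1 (0 : M) + 0 = 0
        rw [map_zero, add_zero]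
      · show (0 : S T) + 0 + cls T (Tz T 1 (0 : M)) 0 = 0
        rw [cls_zero_right, add_zero, add_zero]
  | pred i ih =>
      have hinv : ((((1 : ℤ), (0 : M), (0 : S T)) : F T))⁻¹ = ((-1, 0, 0) : F T) := by
        rw [F_inv]
        refine Prod.ext rfl (Prod.ext ?_ ?_)
        · show -(Tz T (-1) (0 : M)) = 0
          rw [map_zero, neg_zero]
        · show -(0 : S T) + cls T (0 : M) (0 : M) = 0
          rw [neg_zero, zero_add, cls_zero_left]
      rw [show -(i : ℤ) - 1 = -(i : ℤ) + -1 from by ring, zpow_add, zpow_neg_one, ih, hinv,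
        F_mul]
      refine Prod.ext rfl (Prod.ext ?_ ?_)
      · show Tz T (-1) (0 : M) + 0 = 0
        rw [map_zero, add_zero]
      · show (0 : S T) + 0 + cls T (Tz T (-1) (0 : M)) 0 = 0
        rw [cls_zero_right, add_zero, add_zero]

lemma F_calc (x y : M) :
    (((0 : ℤ), x, (0 : S T)) : F T) * (((0 : ℤ), y, (0 : S T)) : F T)
        * ((((0 : ℤ), x + y, (0 : S T)) : F T))⁻¹
      = (((0 : ℤ), (0 : M), cls T x y) : F T) := by
  rw [F_mul, F_inv, F_mul]
  refine Prod.ext (by ring) (Prod.ext ?_ ?_)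
  · show Tz T (-0) (Tz T 0 x + y) + -(Tz T (-0) (x + y)) = 0
    simp only [neg_zero, Tz_zero]
    abel
  · show (0 : S T) + 0 + cls T (Tz T 0 x) y + (-(0 : S T) + cls T (x + y) (x + y))
        + cls T (Tz T (-0) (Tz T 0 x + y)) (-(Tz T (-0) (x + y))) = cls T x y
    simp only [neg_zero, Tz_zero, cls_neg_right]
    abel

lemma F_third (γ δ : S T) :
    (((0 : ℤ), (0 : M), γ) : F T) * (((0 : ℤ), (0 : M), δ) : F T)
      = (((0 : ℤ), (0 : M), γ + δ) : F T) := by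
  rw [F_mul]
  refine Prod.ext rfl (Prod.ext ?_ ?_)
  · show Tz T 0 (0 : M) + 0 = 0
    rw [Tz_zero, add_zero]
  · show γ + δ + cls T (Tz T 0 (0 : M)) 0 = γ + δ
    rw [cls_zero_right, add_zero]

end Aux3

/-- If `1 - T` is invertible and `φ : Adj(A(M,T)) → F(M,T)` is the isomorphism with
`φ(e_x) = (1, x, 0)`, then the unique homomorphism `ε : Adj(A(M,T)) → ℤ` with `ε(e_x) = 1`
corresponds under `φ` to `(k, x, α) ↦ k`; consequently `φ` restricts to an isomorphism of
`Adj(A(M,T))⁰ = ker ε` onto `F(M,T)⁰ = {(0, x, α)}`, whose multiplication is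
`(0, x, α)(0, y, β) = (0, x + y, α + β + [x ⊗ y])`. -/
theorem statement14 (T : M ≃+ M) (hT : Function.Bijective fun x : M => x - T x)
    (φ : Adj T →* F T) (hφ : ∀ x : M, φ (e T x) = (((1 : ℤ), x, (0 : S T)) : F T)) :
    (∀ g : Adj T, ε T g = Multiplicative.ofAdd (φ g).1) ∧
    (∀ g : Adj T, g ∈ (ε T).ker ↔ φ g ∈ Fo T) ∧
    (∃ ψ : (ε T).ker ≃* Fo T, ∀ g : (ε T).ker, (ψ g : F T) = φ (g : Adj T)) ∧
    (∀ (x y : M) (α β : S T),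
      ((((0 : ℤ), x, α) : F T) * (((0 : ℤ), y, β) : F T))
        = (((0 : ℤ), x + y, α + β + cls T x y) : F T)) := by
  have hφa : φ (aa T) = (((1 : ℤ), (0 : M), (0 : S T)) : F T) := hφ 0
  have hφb : ∀ x : M, φ (bb T x) = (((0 : ℤ), x, (0 : S T)) : F T) := by
    intro x
    have h1 : φ (bb T x) = (φ (aa T))⁻¹ * φ (e T x) := by rw [bb, map_mul, map_inv]
    rw [h1, hφa, hφ x, F_inv]
    have h0 : (-(Tz T (-1) (0 : M))) = (0 : M) := by rw [map_zero, neg_zero]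
    have h2 : (-(0 : S T) + cls T (0 : M) (0 : M)) = 0 := by
      rw [neg_zero, zero_add, cls_zero_left]
    rw [h0, h2, F_mul]
    refine Prod.ext (by ring) (Prod.ext ?_ ?_)
    · show Tz T 1 (0 : M) + x = x
      rw [map_zero, zero_add]
    · show (0 : S T) + 0 + cls T (Tz T 1 (0 : M)) x = 0
      rw [map_zero, cls_zero_left, add_zero, add_zero]
  have hε : ∀ x : M, ε T (e T x) = Multiplicative.ofAdd (1 : ℤ) := fun x => rfl
  have part1 : ∀ g : Adj T, ε T g = Multiplicative.ofAdd (φ g).1 := by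
    let π : F T →* Multiplicative ℤ :=
      MonoidHom.mk' (fun g => Multiplicative.ofAdd g.1) (fun g h => rfl)
    have hπφ : ε T = π.comp φ := by
      apply PresentedGroup.ext
      intro x
      rw [MonoidHom.comp_apply]
      show ε T (e T x) = π (φ (e T x))
      rw [hε, hφ]
      rfl
    intro g
    rw [hπφ]
    rfl
  have hchiφ : ∀ g : Adj T, chi T hT (φ g) = g := by
    have hcomp : (chi T hT).comp φ = MonoidHom.id (Adj T) := by
      apply PresentedGroup.ext
      intro x
      rw [MonoidHom.comp_apply, MonoidHom.id_apply]
      show chi T hT (φ (e T x)) = e T x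
      rw [hφ, chi_gen]
    intro g
    exact DFunLike.congr_fun hcomp g
  have hφinj : Function.Injective φ := by
    intro g g' h
    rw [← hchiφ g, ← hchiφ g', h]
  have hφZ : ∀ α : S T, φ (Zf T hT α) = (((0 : ℤ), (0 : M), α) : F T) := by
    intro α
    obtain ⟨w, rfl⟩ := Submodule.Quotient.mk_surjective _ α
    induction w using TensorProduct.induction_on with
    | zero =>
        rw [Submodule.Quotient.mk_zero, Zf_zero, map_one]
        rfl
    | tmul x y =>
        show φ (Zf T hT (cls T x y)) = (((0 : ℤ), (0 : M), cls T x y) : F T)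
        rw [Zf_cls]
        show φ (bb T x * bb T y * (bb T (x + y))⁻¹) = _
        rw [map_mul, map_mul, map_inv, hφb, hφb, hφb, F_calc]
    | add w w' hw hw' =>
        rw [Submodule.Quotient.mk_add, Zf_add, map_mul, hw, hw', F_third]
  have hφchi : ∀ f : F T, φ (chi T hT f) = f := by
    rintro ⟨k, x, α⟩
    show φ (aa T ^ k * bb T x * Zf T hT α) = ((k, x, α) : F T)
    rw [map_mul, map_mul, map_zpow, hφa, hφb, hφZ, F_gen_pow, F_mul, F_mul]
    refine Prod.ext (by ring) (Prod.ext ?_ ?_)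
    · show Tz T 0 (Tz T 0 (0 : M) + x) + 0 = x
      rw [Tz_zero, Tz_zero, add_zero, zero_add]
    · show (0 : S T) + 0 + cls T (Tz T 0 (0 : M)) x + α
          + cls T (Tz T 0 (Tz T 0 (0 : M) + x)) 0 = α
      rw [Tz_zero, cls_zero_left, cls_zero_right]
      abel
  have part2 : ∀ g : Adj T, g ∈ (ε T).ker ↔ φ g ∈ Fo T := by
    intro g
    rw [MonoidHom.mem_ker, part1]
    constructor
    · intro h
      show (φ g).1 = 0
      exact ofAdd_eq_one.mp h
    · intro h
      have : (φ g).1 = 0 := h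
      rw [this]
      rfl
  refine ⟨part1, part2, ?_, ?_⟩
  · have hmap : ∀ g : (ε T).ker, (φ.comp (ε T).ker.subtype) g ∈ Fo T :=
      fun g => (part2 g).mp g.2
    let φ' : (ε T).ker →* Fo T := (φ.comp (ε T).ker.subtype).codRestrict (Fo T) hmap
    have hbij : Function.Bijective φ' := by
      constructor
      · intro g g' h
        apply Subtype.ext
        apply hφinj
        exact congrArg Subtype.val h
      · rintro ⟨f, hf⟩
        have hker : chi T hT f ∈ (ε T).ker := by
          rw [MonoidHom.mem_ker, part1, hφchi]
          have : f.1 = 0 := hf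
          rw [this]
          rfl
        exact ⟨⟨chi T hT f, hker⟩, Subtype.ext (hφchi f)⟩
    exact ⟨MulEquiv.ofBijective φ' hbij, fun g => rfl⟩
  · intro x y α β
    rw [F_mul]
    refine Prod.ext (by ring) (Prod.ext ?_ ?_)
    · show Tz T 0 x + y = x + y
      rw [Tz_zero]
    · show α + β + cls T (Tz T 0 x) y = α + β + cls T x y
      rw [Tz_zero]

end Clauwens
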